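/- Suppose α₁ and α₂ are irrational, 1, θ, α₁ are linearly independent over ℚ, and θ·α₂ = (p₁/q₁)·θ + (p₂/q₂)·α₁ + p₃/q₃ for integers p₁, p₂, p₃ and positive integers q₁, q₂, q₃. Then for every (t, s) ∈ ℝ², the point (t, s mod 1, ((α₂ − p₁/q₁)·t + (p₂/q₂)·s) mod 1) lies in the closure of S. -/

import Mathlib

open Filter Topology

lemma kron_pigeon (a b : ℝ) {ε : ℝ} (hε : 0 < ε) (N : ℕ) :
    ∃ n : ℕ, N ≤ n ∧ 1 ≤ n ∧ ∃ p q : ℤ, |(n:ℝ) * a + p| < ε ∧ |(n:ℝ) * b + q| < ε := by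
  set M : ℕ := N + 1 with hM
  set K : ℕ := ⌈ε⁻¹⌉₊ with hK
  have hK1 : 1 ≤ K := Nat.one_le_iff_ne_zero.2 (by
    simp only [hK, ne_eq, Nat.ceil_eq_zero, not_le]
    exact inv_pos.2 hε)
  have hKε : (K:ℝ)⁻¹ ≤ ε := by
    rw [inv_le_comm₀ (by exact_mod_cast hK1) hε]
    exact Nat.le_ceil _
  have hbox : ∀ x : ℝ, ⌊Int.fract x * K⌋.toNat < K := by
    intro x
    have h1 : Int.fract x * K < K := by
      have h := Int.fract_lt_one x
      have hKpos : (1:ℝ) ≤ K := by exact_mod_cast hK1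
      nlinarith [Int.fract_nonneg x]
    have : ⌊Int.fract x * K⌋ < (K:ℤ) := Int.floor_lt.2 (by exact_mod_cast h1)
    omega
  have : ∃ i j : ℕ, i ≠ j ∧
      ((⟨_, hbox ((i*M:ℕ)*a)⟩ : Fin K), (⟨_, hbox ((i*M:ℕ)*b)⟩ : Fin K)) =
      ((⟨_, hbox ((j*M:ℕ)*a)⟩ : Fin K), (⟨_, hbox ((j*M:ℕ)*b)⟩ : Fin K)) :=
    Finite.exists_ne_map_eq_of_infinite _
  obtain ⟨i, j, hij, heq2⟩ := this
  wlog hlt : j < i generalizing i j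
  · exact this j i hij.symm heq2.symm (by omega)
  have hclose : ∀ x y : ℝ, ⌊Int.fract x * K⌋ = ⌊Int.fract y * K⌋ →
      |Int.fract x - Int.fract y| < ε := by
    intro x y h
    have h1 : |Int.fract x * K - Int.fract y * K| < 1 := Int.abs_sub_lt_one_of_floor_eq_floor h
    have hKpos : (0:ℝ) < K := by exact_mod_cast hK1
    have h2 : |Int.fract x - Int.fract y| * K < 1 := by
      rw [← abs_of_pos hKpos, ← abs_mul, sub_mul]; exact h1
    have h3 : |Int.fract x - Int.fract y| < (K:ℝ)⁻¹ := by
      rw [← one_div]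
      exact (lt_div_iff₀ hKpos).2 h2
    exact h3.trans_le hKε
  rw [Prod.ext_iff] at heq2
  obtain ⟨ha', hb'⟩ := heq2
  rw [Fin.mk.injEq] at ha' hb'
  have hfa : ⌊Int.fract ((↑(i * M):ℝ) * a) * ↑K⌋ = ⌊Int.fract ((↑(j * M):ℝ) * a) * ↑K⌋ := by
    have n1 : 0 ≤ ⌊Int.fract ((↑(i * M):ℝ) * a) * ↑K⌋ := Int.floor_nonneg.2 (mul_nonneg (Int.fract_nonneg _) (by positivity))
    have n2 : 0 ≤ ⌊Int.fract ((↑(j * M):ℝ) * a) * ↑K⌋ := Int.floor_nonneg.2 (mul_nonneg (Int.fract_nonneg _) (by positivity))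
    omega
  have hfb : ⌊Int.fract ((↑(i * M):ℝ) * b) * ↑K⌋ = ⌊Int.fract ((↑(j * M):ℝ) * b) * ↑K⌋ := by
    have n1 : 0 ≤ ⌊Int.fract ((↑(i * M):ℝ) * b) * ↑K⌋ := Int.floor_nonneg.2 (mul_nonneg (Int.fract_nonneg _) (by positivity))
    have n2 : 0 ≤ ⌊Int.fract ((↑(j * M):ℝ) * b) * ↑K⌋ := Int.floor_nonneg.2 (mul_nonneg (Int.fract_nonneg _) (by positivity))
    omega
  refine ⟨(i - j) * M, ?_, ?_, ⌊((↑(j*M):ℝ) * a)⌋ - ⌊((↑(i*M):ℝ) * a)⌋,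
      ⌊((↑(j*M):ℝ) * b)⌋ - ⌊((↑(i*M):ℝ) * b)⌋, ?_, ?_⟩
  · calc N ≤ M := by omega
      _ = 1 * M := (one_mul M).symm
      _ ≤ (i - j) * M := Nat.mul_le_mul_right M (by omega)
  · have : 1 * 1 ≤ (i - j) * M := Nat.mul_le_mul (by omega) (by omega)
    omega
  · have key : ((((i-j)*M : ℕ)):ℝ) * a + ((⌊((↑(j*M):ℝ) * a)⌋ - ⌊((↑(i*M):ℝ) * a)⌋ : ℤ):ℝ)
        = Int.fract ((↑(i * M):ℝ) * a) - Int.fract ((↑(j * M):ℝ) * a) := by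
      rw [Int.fract, Int.fract]
      push_cast [Nat.cast_sub hlt.le]
      ring
    rw [key]
    exact hclose _ _ hfa
  · have key : ((((i-j)*M : ℕ)):ℝ) * b + ((⌊((↑(j*M):ℝ) * b)⌋ - ⌊((↑(i*M):ℝ) * b)⌋ : ℤ):ℝ)
        = Int.fract ((↑(i * M):ℝ) * b) - Int.fract ((↑(j * M):ℝ) * b) := by
      rw [Int.fract, Int.fract]
      push_cast [Nat.cast_sub hlt.le]
      ring
    rw [key]
    exact hclose _ _ hfb
/-- `⌊x/v⌋ * v` is within `|v|` of `x`. -/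
lemma floor_mul_close {v : ℝ} (hv : v ≠ 0) (x : ℝ) : |(⌊x / v⌋ : ℝ) * v - x| ≤ |v| := by
  have h1 : (⌊x / v⌋ : ℝ) ≤ x / v := Int.floor_le _
  have h2 : x / v < ⌊x / v⌋ + 1 := Int.lt_floor_add_one _
  have key : (⌊x / v⌋ : ℝ) * v - x = -((x/v - ⌊x / v⌋) * v) := by field_simp; ring
  rw [key, abs_neg, abs_mul]
  have : |x/v - (⌊x / v⌋:ℝ)| ≤ 1 := by rw [abs_le]; constructor <;> nlinarith
  nlinarith [abs_nonneg v, abs_pos.2 hv]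

/-- 1-D inhomogeneous approximation with a nonzero coefficient. -/
lemma oneD_approx {a : ℝ} (hA : ∀ n p : ℤ, n ≠ 0 → (n:ℝ) * a + p ≠ 0) (x : ℝ)
    {ε : ℝ} (hε : 0 < ε) : ∃ n p : ℤ, n ≠ 0 ∧ |(n:ℝ) * a + p - x| < ε := by
  obtain ⟨n₀, -, hn₀1, p₀, q₀, hp₀, -⟩ := kron_pigeon a a (half_pos hε) 0
  have hn₀ : (n₀:ℤ) ≠ 0 := by exact_mod_cast Nat.one_le_iff_ne_zero.1 hn₀1
  set v : ℝ := (n₀:ℝ) * a + p₀ with hv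
  have hvne : v ≠ 0 := by
    have := hA n₀ p₀ hn₀
    push_cast at this ⊢; exact this
  have hvε : |v| < ε / 2 := hp₀
  set m₀ : ℤ := ⌊x / v⌋ with hm₀
  by_cases hm : m₀ = 0
  · refine ⟨n₀, p₀, hn₀, ?_⟩
    have h1 : (0:ℝ) ≤ x / v := Int.floor_nonneg.1 (le_of_eq (hm₀ ▸ hm).symm)
    have h2 : x / v < 1 := by
      have := Int.lt_floor_add_one (x / v)
      rw [← hm₀, hm] at this; simpa using this
    have hxv : |x| ≤ |v| := by
      have : |x / v| ≤ 1 := by rw [abs_le]; constructor <;> linarith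
      rw [abs_div] at this
      calc |x| = |x| / |v| * |v| := by field_simp
        _ ≤ 1 * |v| := by
            apply mul_le_mul_of_nonneg_right this (abs_nonneg v)
        _ = |v| := one_mul _
    have : ((n₀:ℤ):ℝ) * a + p₀ - x = v - x := by rw [hv]; push_cast; ring
    rw [this]
    calc |v - x| ≤ |v| + |x| := abs_sub _ _
      _ ≤ 2 * |v| := by linarith
      _ < ε := by linarith
  · refine ⟨m₀ * n₀, m₀ * p₀, mul_ne_zero hm hn₀, ?_⟩
    have : ((m₀ * n₀ : ℤ):ℝ) * a + ((m₀ * p₀ : ℤ):ℝ) = (m₀:ℝ) * v := by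
      rw [hv]; push_cast; ring
    rw [this]
    calc |(m₀:ℝ) * v - x| ≤ |v| := floor_mul_close hvne x
      _ < ε := by linarith
/-- Approximation predicate: `(0, y)` is in the closure of `{(n a + p, n b + q)}`. -/
def ZA (a b y : ℝ) : Prop :=
  ∀ ε : ℝ, 0 < ε → ∃ n p q : ℤ, |(n:ℝ)*a + p| < ε ∧ |(n:ℝ)*b + q - y| < ε

lemma ZA_int (a b : ℝ) (z : ℤ) : ZA a b z := by
  intro ε hε
  exact ⟨0, 0, z, by simpa using hε, by simpa using hε⟩

lemma ZA.add {a b y y' : ℝ} (h : ZA a b y) (h' : ZA a b y') : ZA a b (y + y') := by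
  intro ε hε
  obtain ⟨n, p, q, h1, h2⟩ := h (ε/2) (half_pos hε)
  obtain ⟨n', p', q', h1', h2'⟩ := h' (ε/2) (half_pos hε)
  refine ⟨n + n', p + p', q + q', ?_, ?_⟩
  · have e : ((n + n' : ℤ):ℝ)*a + ((p + p':ℤ):ℝ)
        = ((n:ℝ)*a + p) + ((n':ℝ)*a + p') := by push_cast; ring
    rw [e]
    calc |((n:ℝ)*a + p) + ((n':ℝ)*a + p')| ≤ |(n:ℝ)*a + p| + |(n':ℝ)*a + p'| := abs_add_le _ _
      _ < ε := by linarith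
  · have e : ((n + n' : ℤ):ℝ)*b + ((q + q':ℤ):ℝ) - (y + y')
        = ((n:ℝ)*b + q - y) + ((n':ℝ)*b + q' - y') := by push_cast; ring
    rw [e]
    calc |((n:ℝ)*b + q - y) + ((n':ℝ)*b + q' - y')|
        ≤ |(n:ℝ)*b + q - y| + |(n':ℝ)*b + q' - y'| := abs_add_le _ _
      _ < ε := by linarith

lemma ZA.neg {a b y : ℝ} (h : ZA a b y) : ZA a b (-y) := by
  intro ε hε
  obtain ⟨n, p, q, h1, h2⟩ := h ε hε
  refine ⟨-n, -p, -q, ?_, ?_⟩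
  · have e : ((-n : ℤ):ℝ)*a + ((-p:ℤ):ℝ) = -((n:ℝ)*a + p) := by push_cast; ring
    rw [e, abs_neg]; exact h1
  · have e : ((-n : ℤ):ℝ)*b + ((-q:ℤ):ℝ) - (-y) = -((n:ℝ)*b + q - y) := by push_cast; ring
    rw [e, abs_neg]; exact h2

/-- The set of `y` with `ZA a b y`, as an additive subgroup of `ℝ`. -/
def Dgrp (a b : ℝ) : AddSubgroup ℝ where
  carrier := {y | ZA a b y}
  zero_mem' := by simpa using ZA_int a b 0
  add_mem' := fun h h' => h.add h'
  neg_mem' := fun h => h.neg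

lemma mem_Dgrp {a b y : ℝ} : y ∈ Dgrp a b ↔ ZA a b y := Iff.rfl

lemma abs_floor_le (u : ℝ) : |(⌊u⌋:ℝ)| ≤ |u| + 1 := by
  rw [abs_le]
  constructor <;>
    nlinarith [Int.floor_le u, Int.lt_floor_add_one u, le_abs_self u, neg_abs_le u]

lemma infinite_choice {T : Set ℕ} (hT : T.Infinite) : ∃ J : ℕ → ℕ, ∀ k, J k ∈ T ∧ k < J k :=
  ⟨fun k => (hT.exists_gt k).choose, fun k =>
    ⟨(hT.exists_gt k).choose_spec.1, (hT.exists_gt k).choose_spec.2⟩⟩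
set_option maxHeartbeats 1000000 in
lemma K2main {a b : ℝ}
    (hind : ∀ c₀ c₁ c₂ : ℤ, (c₀:ℝ) + (c₁:ℝ)*a + (c₂:ℝ)*b = 0 → c₀ = 0 ∧ c₁ = 0 ∧ c₂ = 0) :
    ∀ y : ℝ, ZA a b y := by
  have hA : ∀ n p : ℤ, n ≠ 0 → (n:ℝ)*a + p ≠ 0 := by
    intro n p hn h
    exact hn (hind p n 0 (by push_cast; linarith)).2.1
  by_contra hcon
  push_neg at hcon
  obtain ⟨y₀, hy₀⟩ := hcon
  rcases (Dgrp a b).dense_or_cyclic with hD | ⟨c, hc⟩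
  · -- dense case: every y is approximable
    apply hy₀
    intro ε hε
    obtain ⟨y', hy'D, hyd⟩ := Metric.mem_closure_iff.1 (hD y₀) (ε/2) (half_pos hε)
    obtain ⟨n, p, q, h1, h2⟩ := (mem_Dgrp.1 hy'D) (ε/2) (half_pos hε)
    refine ⟨n, p, q, lt_trans h1 (half_lt_self hε), ?_⟩
    have : |(n:ℝ)*b + q - y₀| ≤ |(n:ℝ)*b + q - y'| + |y' - y₀| := abs_sub_le _ _ _
    rw [Real.dist_eq, abs_sub_comm] at hyd
    linarith
  · -- cyclic case
    have h1D : (1:ℝ) ∈ Dgrp a b := by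
      have := ZA_int a b 1
      exact mem_Dgrp.2 (by simpa using this)
    rw [hc] at h1D
    obtain ⟨k₀, hk₀⟩ := AddSubgroup.mem_closure_singleton.1 h1D
    have hk₀0 : k₀ ≠ 0 := by rintro rfl; simp at hk₀
    have hkc : (k₀:ℝ) * c = 1 := by rw [← zsmul_eq_mul]; exact hk₀
    have hcne : c ≠ 0 := by rintro rfl; simp at hkc
    set d : ℕ := k₀.natAbs with hd
    have hdpos : 0 < d := Int.natAbs_pos.2 hk₀0
    have hdR : (0:ℝ) < d := by exact_mod_cast hdpos
    set B : ℝ := (d:ℝ) * b with hB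
    -- the sign unit
    obtain ⟨e, hec, he1⟩ : ∃ e : ℤ, (e:ℝ) * c = 1 / d ∧ (e = 1 ∨ e = -1) := by
      rcases Int.natAbs_eq k₀ with h | h
      · refine ⟨1, ?_, Or.inl rfl⟩
        have : (k₀:ℝ) = d := by rw [h]; simp [Nat.cast_natAbs, hd]
        rw [← this]; push_cast
        field_simp
        linarith [hkc]
      · refine ⟨-1, ?_, Or.inr rfl⟩
        have : (k₀:ℝ) = -d := by rw [h]; simp [Nat.cast_natAbs, hd]
        push_cast
        rw [this] at hkc
        field_simp
        linarith [hkc]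
    have heR : (e:ℝ) = 1 ∨ (e:ℝ) = -1 := by
      rcases he1 with h | h <;> [left; right] <;> rw [h] <;> push_cast <;> ring
    -- key: ZA a B y forces y ∈ ℤ
    have hdc : (d:ℝ) * c = e := by
      rcases heR with h | h
      · rw [h]
        have : c = 1/(d:ℝ) := by rw [← hec, h]; ring
        rw [this]; field_simp
      · rw [h]
        have : c = -(1/(d:ℝ)) := by
          have : (-1:ℝ) * c = 1/d := by rw [← h]; exact hec
          linarith
        rw [this]; field_simp
    have hZB : ∀ y : ℝ, ZA a B y → ∃ m : ℤ, y = m := by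
      intro y hy
      have hquot : ZA a b (y/d) := by
        intro ε hε
        obtain ⟨n, p, q, h1, h2⟩ := hy (min (ε/4) (d*(ε/4))) (by positivity)
        have h1' : |(n:ℝ)*a + p| < ε/4 := lt_of_lt_of_le h1 (min_le_left _ _)
        have h2' : |(n:ℝ)*b + (q:ℝ)/d - y/d| < ε/4 := by
          have e2 : (n:ℝ)*b + (q:ℝ)/d - y/d = ((n:ℝ)*B + q - y)/d := by
            rw [hB]; field_simp
          rw [e2, abs_div, abs_of_pos hdR, div_lt_iff₀ hdR]
          calc |(n:ℝ)*B + q - y| < min (ε/4) (d*(ε/4)) := h2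
            _ ≤ d*(ε/4) := min_le_right _ _
            _ = ε/4*d := by ring
        have hqd : ZA a b ((q:ℝ)/d) := by
          have hmem : ((q:ℝ)/d) ∈ Dgrp a b := by
            rw [hc]
            refine AddSubgroup.mem_closure_singleton.2 ⟨q*e, ?_⟩
            rw [zsmul_eq_mul]; push_cast
            calc (q:ℝ)*(e:ℝ)*c = (q:ℝ) * ((e:ℝ)*c) := by ring
              _ = (q:ℝ) * (1/(d:ℝ)) := by rw [hec]
              _ = (q:ℝ)/d := by ring
          exact hmem
        obtain ⟨n', p', q', h1'', h2''⟩ := hqd (ε/4) (by positivity)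
        refine ⟨n + n', p + p', q', ?_, ?_⟩
        · have e3 : ((n+n':ℤ):ℝ)*a + ((p+p':ℤ):ℝ) = ((n:ℝ)*a+p) + ((n':ℝ)*a+p') := by
            push_cast; ring
          rw [e3]
          calc |((n:ℝ)*a+p) + ((n':ℝ)*a+p')| ≤ |(n:ℝ)*a+p| + |(n':ℝ)*a+p'| := abs_add_le _ _
            _ < ε := by linarith
        · have e4 : ((n+n':ℤ):ℝ)*b + ((q':ℤ):ℝ) - y/d
              = ((n:ℝ)*b + (q:ℝ)/d - y/d) + ((n':ℝ)*b + q' - (q:ℝ)/d) := by push_cast; ring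
          rw [e4]
          calc |((n:ℝ)*b + (q:ℝ)/d - y/d) + ((n':ℝ)*b + q' - (q:ℝ)/d)|
              ≤ |(n:ℝ)*b + (q:ℝ)/d - y/d| + |(n':ℝ)*b + q' - (q:ℝ)/d| := abs_add_le _ _
            _ < ε := by linarith
      have hmem2 : y/d ∈ AddSubgroup.closure {c} := by rw [← hc]; exact hquot
      obtain ⟨m, hm⟩ := AddSubgroup.mem_closure_singleton.1 hmem2
      rw [zsmul_eq_mul] at hm
      refine ⟨m * e, ?_⟩
      have hy2 : y = (d:ℝ) * ((m:ℝ)*c) := by rw [hm]; field_simp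
      rw [hy2]
      have e5 : (d:ℝ)*((m:ℝ)*c) = (m:ℝ)*((d:ℝ)*c) := by ring
      rw [e5, hdc]; push_cast; ring
    -- nonvanishing for B
    have hBne : ∀ n q : ℤ, n ≠ 0 → (n:ℝ)*B + q ≠ 0 := by
      intro n q hn h
      have : (q:ℝ) + (0:ℤ)*a + ((n * d : ℤ):ℝ)*b = 0 := by
        push_cast
        rw [hB] at h; push_cast at h
        linarith [h]
      have h2 := (hind q 0 (n * d) this).2.2
      have : (d:ℤ) ≠ 0 := by exact_mod_cast hdpos.ne'
      exact hn (by simpa [mul_eq_zero, this, hdpos.ne'] using h2)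
    -- construct the approximating sequences
    have hseq : ∀ j : ℕ, ∃ n p : ℤ, n ≠ 0 ∧
        |(n:ℝ)*a + p - (1/(2*((j:ℝ)+1)))| < 1/(2*((j:ℝ)+1)) :=
      fun j => oneD_approx hA _ (by positivity)
    choose sn sp hsn hsx using hseq
    set xs : ℕ → ℝ := fun j => (sn j : ℝ)*a + sp j with hxs
    set sq : ℕ → ℤ := fun j => -round ((sn j : ℝ) * B) with hsq
    set ys : ℕ → ℝ := fun j => (sn j : ℝ)*B + sq j with hys
    have hxpos : ∀ j, 0 < xs j := by
      intro j
      have h := hsx j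
      rw [abs_lt] at h
      have : (0:ℝ) < 1/(2*((j:ℝ)+1)) := by positivity
      simp only [hxs]; linarith [h.1]
    have hxlt : ∀ j, xs j < 1/((j:ℝ)+1) := by
      intro j
      have h := hsx j
      rw [abs_lt] at h
      have e : 2 * (1/(2*((j:ℝ)+1))) = 1/((j:ℝ)+1) := by field_simp
      simp only [hxs] at *
      linarith [h.2]
    have hxne : ∀ j, xs j ≠ 0 := fun j => (hxpos j).ne'
    have hyabs : ∀ j, |ys j| ≤ 1/2 := by
      intro j
      have := abs_sub_round ((sn j:ℝ) * B)
      have e2 : (sn j:ℝ)*B + ((-round ((sn j:ℝ)*B) : ℤ):ℝ)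
          = (sn j:ℝ)*B - round ((sn j:ℝ)*B) := by push_cast; ring
      simp only [hys, hsq]
      rw [e2]
      exact this
    have hyne : ∀ j, ys j ≠ 0 := fun j => hBne (sn j) (sq j) (hsn j)
    have hy0 : Filter.Tendsto ys Filter.atTop (nhds 0) := by
      by_contra hny
      rw [Metric.tendsto_atTop] at hny
      push_neg at hny
      obtain ⟨ε, hε, hfreq⟩ := hny
      set T := {j : ℕ | ε ≤ |ys j|} with hT
      have hTinf : T.Infinite := by
        apply Set.infinite_of_not_bddAbove
        rintro ⟨Nb, hNb⟩
        obtain ⟨j, hj1, hj2⟩ := hfreq (Nb+1)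
        have hjT : j ∈ T := by
          simp only [hT, Set.mem_setOf_eq]
          rw [Real.dist_eq, sub_zero] at hj2
          exact hj2
        have := hNb hjT
        omega
      obtain ⟨J, hJ⟩ := infinite_choice hTinf
      have hmem : ∀ k, ys (J k) ∈ Set.Icc (-(1/2):ℝ) (1/2) := fun k => by
        have h := abs_le.1 (hyabs (J k)); exact ⟨h.1, h.2⟩
      obtain ⟨ystar, hymem, φ, hφ, hconv⟩ := (isCompact_Icc).tendsto_subseq hmem
      have hZy : ZA a B ystar := by
        intro δ hδ
        obtain ⟨N₁, hN₁⟩ := Metric.tendsto_atTop.1 hconv δ hδ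
        obtain ⟨N₂, hN₂⟩ := exists_nat_gt (1/δ)
        set k := max N₁ N₂ with hk
        set j := J (φ k) with hj
        have hjk : k < j := lt_of_le_of_lt (hφ.id_le k) (hJ (φ k)).2
        refine ⟨sn j, sp j, sq j, ?_, ?_⟩
        · have h1 : xs j < 1/((j:ℝ)+1) := hxlt j
          have h2 : 1/((j:ℝ)+1) < δ := by
            rw [div_lt_iff₀ (by positivity)]
            have h3 : (N₂:ℝ) < (j:ℝ)+1 := by
              have : N₂ ≤ k := le_max_right _ _
              exact_mod_cast by omega
            have h5 : 1 < (N₂:ℝ) * δ := (div_lt_iff₀ hδ).1 hN₂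
            nlinarith [h5, hδ, h3]
          have hxj : (sn j:ℝ)*a + sp j = xs j := rfl
          rw [hxj, abs_of_pos (hxpos j)]
          linarith
        · have h4 := hN₁ k (le_max_left _ _)
          simp only [Function.comp_apply] at h4
          rw [Real.dist_eq] at h4
          exact h4
      obtain ⟨m, hm⟩ := hZB ystar hZy
      have h1 : ε ≤ |ystar| := by
        apply ge_of_tendsto hconv.abs
        apply Filter.Eventually.of_forall
        intro k
        simp only [Function.comp_apply]
        exact (hJ (φ k)).1
      have hm0 : m = 0 := by
        by_contra hmne
        have h5 : (1:ℝ) ≤ |(m:ℝ)| := by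
          have h6 := Int.one_le_abs hmne
          calc (1:ℝ) = ((1:ℤ):ℝ) := by norm_num
            _ ≤ ((|m|:ℤ):ℝ) := by exact_mod_cast h6
            _ = |(m:ℝ)| := by push_cast; ring
        have h2 : |ystar| ≤ 1/2 := abs_le.2 ⟨hymem.1, hymem.2⟩
        rw [← hm] at h5; linarith
      rw [hm0] at hm
      simp only [Int.cast_zero] at hm
      rw [hm] at h1
      simp only [abs_zero] at h1
      linarith
    set r : ℕ → ℝ := fun j => ys j / xs j with hr
    have hrne : ∀ j, r j ≠ 0 := fun j => div_ne_zero (hyne j) (hxne j)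
    have hysr : ∀ j, ys j = xs j * r j := by
      intro j
      rw [hr, mul_comm]
      exact (div_mul_cancel₀ (ys j) (hxne j)).symm
    by_cases hM : ∃ M : ℝ, {j | |r j| ≤ M}.Infinite
    · -- bounded ratios on an infinite set: slope argument
      obtain ⟨M, hMinf⟩ := hM
      have hM0 : 0 ≤ M := by
        obtain ⟨j₀, hj₀⟩ := hMinf.nonempty
        exact le_trans (abs_nonneg _) hj₀
      obtain ⟨J, hJ⟩ := infinite_choice hMinf
      have hmem : ∀ k, r (J k) ∈ Set.Icc (-M) M := fun k => by
        have h0 : |r (J k)| ≤ M := (hJ k).1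
        have h := abs_le.1 h0; exact ⟨h.1, h.2⟩
      obtain ⟨μ, hμmem, φ, hφ, hconv⟩ := (isCompact_Icc).tendsto_subseq hmem
      have claimC : ∀ x' : ℝ, ∀ δ : ℝ, 0 < δ → ∃ n p q : ℤ,
          |(n:ℝ)*a + p - x'| < δ ∧ |(n:ℝ)*B + q - μ*x'| < δ := by
        intro x' δ hδ
        set δ' : ℝ := δ/(4*(|x'|+1)) with hδ'
        have hδ'pos : 0 < δ' := by positivity
        set δ'' : ℝ := min (δ/2) (δ/(4*(M+1))) with hδ''
        have hδ''pos : 0 < δ'' := lt_min (by positivity) (by positivity)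
        obtain ⟨N₁, hN₁⟩ := Metric.tendsto_atTop.1 hconv δ' hδ'pos
        obtain ⟨N₂, hN₂⟩ := exists_nat_gt (1/δ'')
        set k := max N₁ N₂ with hk
        set j := J (φ k) with hjdef
        have hjk : k < j := lt_of_le_of_lt (hφ.id_le k) (hJ (φ k)).2
        have hxsmall : xs j < δ'' := by
          have h1 : xs j < 1/((j:ℝ)+1) := hxlt j
          have h3 : (N₂:ℝ) < (j:ℝ)+1 := by
            have : N₂ ≤ k := le_max_right _ _
            exact_mod_cast by omega
          have h5 : 1 < (N₂:ℝ) * δ'' := (div_lt_iff₀ hδ''pos).1 hN₂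
          have h2 : 1/((j:ℝ)+1) < δ'' := by
            rw [div_lt_iff₀ (by positivity)]
            nlinarith
          exact h1.trans h2
        have hrclose : |r j - μ| < δ' := by
          have h4 := hN₁ k (le_max_left _ _)
          simp only [Function.comp_apply] at h4
          rw [Real.dist_eq] at h4
          exact h4
        have l2 : |r j| ≤ M := (hJ (φ k)).1
        set mm : ℤ := ⌊x' / xs j⌋ with hmm
        have l1 : |(mm:ℝ)*xs j - x'| ≤ xs j := by
          have h := floor_mul_close (hxne j) x'
          rwa [abs_of_pos (hxpos j)] at h
        refine ⟨mm * sn j, mm * sp j, mm * sq j, ?_, ?_⟩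
        · have e1 : ((mm * sn j:ℤ):ℝ)*a + ((mm * sp j:ℤ):ℝ) = (mm:ℝ) * xs j := by
            simp only [hxs]; push_cast; ring
          rw [e1]
          calc |(mm:ℝ)*xs j - x'| ≤ xs j := l1
            _ < δ'' := hxsmall
            _ ≤ δ/2 := min_le_left _ _
            _ < δ := by linarith
        · have e2 : ((mm * sn j:ℤ):ℝ)*B + ((mm * sq j:ℤ):ℝ) = (mm:ℝ) * ys j := by
            simp only [hys]; push_cast; ring
          rw [e2]
          have edec : (mm:ℝ)*ys j - μ*x'
              = ((mm:ℝ)*xs j - x')*(r j) + x'*(r j - μ) := by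
            rw [hysr j]; ring
          rw [edec]
          have hb1 : |((mm:ℝ)*xs j - x')*(r j)| ≤ δ''*M := by
            rw [abs_mul]
            exact mul_le_mul (le_of_lt (lt_of_le_of_lt l1 hxsmall)) l2 (abs_nonneg _)
              (le_of_lt hδ''pos)
          have hb2 : |x'*(r j - μ)| ≤ (|x'|+1)*δ' := by
            rw [abs_mul]
            exact mul_le_mul (by linarith [abs_nonneg x']) (le_of_lt hrclose) (abs_nonneg _)
              (by positivity)
          have hb1' : δ''*M ≤ δ/4 := by
            have hle : δ'' ≤ δ/(4*(M+1)) := min_le_right _ _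
            calc δ''*M ≤ (δ/(4*(M+1)))*M := mul_le_mul_of_nonneg_right hle hM0
              _ ≤ δ/4 := by
                  rw [div_mul_eq_mul_div, div_le_div_iff₀ (by positivity) (by norm_num)]
                  nlinarith
          have hb2' : (|x'|+1)*δ' ≤ δ/4 := by
            have : (|x'|+1)*δ' = δ/4 := by
              rw [hδ']
              field_simp
            linarith
          calc |((mm:ℝ)*xs j - x')*(r j) + x'*(r j - μ)|
              ≤ |((mm:ℝ)*xs j - x')*(r j)| + |x'*(r j - μ)| := abs_add_le _ _
            _ ≤ δ/4 + δ/4 := by linarith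
            _ < δ := by linarith
      have hμ1 : ZA a B μ := by
        intro δ hδ
        obtain ⟨n, p, q, h1, h2⟩ := claimC 1 δ hδ
        refine ⟨n, p - 1, q, ?_, ?_⟩
        · have e : ((n:ℤ):ℝ)*a + ((p-1:ℤ):ℝ) = ((n:ℝ)*a + p - 1) := by push_cast; ring
          rw [e]; exact h1
        · have e : (n:ℝ)*B + (q:ℝ) - μ = (n:ℝ)*B + q - μ*1 := by ring
          rw [e]; exact h2
      have hμ2 : ZA a B (μ*a - B) := by
        intro δ hδ
        obtain ⟨n, p, q, h1, h2⟩ := claimC a δ hδ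
        refine ⟨n - 1, p, q, ?_, ?_⟩
        · have e : ((n-1:ℤ):ℝ)*a + (p:ℝ) = ((n:ℝ)*a + p - a) := by push_cast; ring
          rw [e]; exact h1
        · have e : ((n-1:ℤ):ℝ)*B + (q:ℝ) - (μ*a - B) = ((n:ℝ)*B + q - μ*a) := by
            push_cast; ring
          rw [e]; exact h2
      obtain ⟨m₂, hm₂⟩ := hZB μ hμ1
      obtain ⟨m₁, hm₁⟩ := hZB _ hμ2
      have hrel : ((-m₁ : ℤ):ℝ) + ((m₂:ℤ):ℝ)*a + ((-(d:ℤ) : ℤ):ℝ)*b = 0 := by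
        push_cast
        rw [hB, hm₂] at hm₁
        linarith [hm₁]
      have hd2 := (hind _ _ _ hrel).2.2
      have hd3 : (d:ℤ) = 0 := by omega
      exact absurd (by exact_mod_cast hd3) hdpos.ne'
    · -- ratios tend to infinity
      push_neg at hM
      have hall : ZA a B (1/2 : ℝ) := by
        intro δ hδ
        set y : ℝ := 1/2 with hy
        set C : ℝ := (|y| + 1)/(δ/2) with hC
        have hCpos : 0 < C := by positivity
        obtain ⟨Nb, hNb⟩ := (hM C).bddAbove
        obtain ⟨N₂, hN₂⟩ := exists_nat_gt (1/(δ/4))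
        obtain ⟨N₃, hN₃⟩ := Metric.tendsto_atTop.1 hy0 (δ/2) (by linarith)
        set j := max (max (Nb+1) N₂) N₃ with hjdef
        have hjC : C < |r j| := by
          by_contra hle
          push_neg at hle
          have hmemj : j ∈ {j | |r j| ≤ C} := hle
          have := hNb hmemj
          omega
        have hxsmall : xs j < δ/4 := by
          have h1 : xs j < 1/((j:ℝ)+1) := hxlt j
          have h3 : (N₂:ℝ) < (j:ℝ)+1 := by exact_mod_cast by omega
          have h5 : 1 < (N₂:ℝ) * (δ/4) := (div_lt_iff₀ (by linarith)).1 hN₂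
          have h2 : 1/((j:ℝ)+1) < δ/4 := by
            rw [div_lt_iff₀ (by positivity)]
            nlinarith
          linarith
        have hysmall : |ys j| < δ/2 := by
          have h := hN₃ j (le_max_right _ _)
          rwa [Real.dist_eq, sub_zero] at h
        set mm : ℤ := ⌊y / ys j⌋ with hmm
        have hf : |(mm:ℝ)*ys j - y| ≤ |ys j| := floor_mul_close (hyne j) y
        refine ⟨mm * sn j, mm * sp j, mm * sq j, ?_, ?_⟩
        · have e1 : ((mm * sn j:ℤ):ℝ)*a + ((mm * sp j:ℤ):ℝ) = (mm:ℝ) * xs j := by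
            simp only [hxs]; push_cast; ring
          rw [e1, abs_mul, abs_of_pos (hxpos j)]
          have h5 : |(mm:ℝ)| * |ys j| ≤ |y| + |ys j| := by
            rw [← abs_mul]
            calc |(mm:ℝ)*ys j| = |((mm:ℝ)*ys j - y) + y| := by ring_nf
              _ ≤ |(mm:ℝ)*ys j - y| + |y| := abs_add_le _ _
              _ ≤ |ys j| + |y| := by linarith
              _ = |y| + |ys j| := by ring
          have h6 : C * xs j < |ys j| := by
            have hrj : |r j| = |ys j| / xs j := by
              rw [hr]
              simp only []
              rw [abs_div, abs_of_pos (hxpos j)]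
            rw [hrj] at hjC
            exact (lt_div_iff₀ (hxpos j)).1 hjC
          have h7 : |(mm:ℝ)| * xs j * C ≤ |y| + 1 := by
            have step : |(mm:ℝ)| * (C * xs j) ≤ |(mm:ℝ)| * |ys j| :=
              mul_le_mul_of_nonneg_left h6.le (abs_nonneg _)
            have hy1 : |ys j| ≤ 1 := le_trans (hyabs j) (by norm_num)
            nlinarith [h5, step]
          have hCval : (δ/2) * C = |y| + 1 := by
            rw [hC]; field_simp
          have h8 : |(mm:ℝ)| * xs j ≤ δ/2 := by
            have h9 : |(mm:ℝ)| * xs j * C ≤ (δ/2) * C := h7.trans_eq hCval.symm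
            exact le_of_mul_le_mul_right h9 hCpos
          exact lt_of_le_of_lt h8 (half_lt_self hδ)
        · have e2 : ((mm * sn j:ℤ):ℝ)*B + ((mm * sq j:ℤ):ℝ) = (mm:ℝ) * ys j := by
            simp only [hys]; push_cast; ring
          rw [e2]
          calc |(mm:ℝ)*ys j - y| ≤ |ys j| := hf
            _ < δ/2 := hysmall
            _ < δ := by linarith
      obtain ⟨m, hm⟩ := hZB _ hall
      have : (2*m : ℤ) = 1 := by
        have : (2:ℝ)*m = 1 := by rw [← hm]; norm_num
        exact_mod_cast this
      omega
lemma K2full {a b : ℝ}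
    (hind : ∀ c₀ c₁ c₂ : ℤ, (c₀:ℝ) + (c₁:ℝ)*a + (c₂:ℝ)*b = 0 → c₀ = 0 ∧ c₁ = 0 ∧ c₂ = 0)
    (x y : ℝ) {ε : ℝ} (hε : 0 < ε) :
    ∃ n p q : ℤ, |(n:ℝ)*a + p - x| < ε ∧ |(n:ℝ)*b + q - y| < ε := by
  have hA : ∀ n p : ℤ, n ≠ 0 → (n:ℝ)*a + p ≠ 0 := by
    intro n p hn h
    exact hn (hind p n 0 (by push_cast; linarith)).2.1
  obtain ⟨n₁, p₁, -, h1⟩ := oneD_approx hA x (half_pos hε)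
  obtain ⟨n₂, p₂, q₂, h2, h3⟩ := K2main hind ((y:ℝ) - n₁*b) (ε/2) (half_pos hε)
  refine ⟨n₁ + n₂, p₁ + p₂, q₂, ?_, ?_⟩
  · have e : ((n₁+n₂:ℤ):ℝ)*a + ((p₁+p₂:ℤ):ℝ) - x
        = ((n₁:ℝ)*a + p₁ - x) + ((n₂:ℝ)*a + p₂) := by push_cast; ring
    rw [e]
    calc |((n₁:ℝ)*a + p₁ - x) + ((n₂:ℝ)*a + p₂)|
        ≤ |(n₁:ℝ)*a + p₁ - x| + |(n₂:ℝ)*a + p₂| := abs_add_le _ _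
      _ < ε := by linarith
  · have e : ((n₁+n₂:ℤ):ℝ)*b + (q₂:ℝ) - y = ((n₂:ℝ)*b + q₂ - ((y:ℝ) - n₁*b)) := by
      push_cast; ring
    rw [e]
    linarith [h3]

lemma K2nat {a b : ℝ}
    (hind : ∀ c₀ c₁ c₂ : ℤ, (c₀:ℝ) + (c₁:ℝ)*a + (c₂:ℝ)*b = 0 → c₀ = 0 ∧ c₁ = 0 ∧ c₂ = 0)
    (x y : ℝ) {ε : ℝ} (hε : 0 < ε) (N : ℕ) :
    ∃ n : ℕ, N ≤ n ∧ ∃ p q : ℤ, |(n:ℝ)*a + p - x| < ε ∧ |(n:ℝ)*b + q - y| < ε := by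
  obtain ⟨n₁, p₁, q₁, h1, h2⟩ := K2full hind x y (half_pos hε)
  obtain ⟨n₂, hN2, hn21, p₂, q₂, h3, h4⟩ := kron_pigeon a b (half_pos hε) (N + n₁.natAbs)
  have hnn : (0:ℤ) ≤ n₁ + n₂ := by omega
  have hcast : (((n₁ + (n₂:ℤ)).toNat : ℕ):ℝ) = (n₁:ℝ) + (n₂:ℕ) := by
    have h6 : ((n₁ + (n₂:ℤ)).toNat : ℤ) = n₁ + n₂ := Int.toNat_of_nonneg hnn
    exact_mod_cast h6
  refine ⟨(n₁ + (n₂:ℤ)).toNat, by omega, p₁ + p₂, q₁ + q₂, ?_, ?_⟩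
  · have e : (((n₁ + (n₂:ℤ)).toNat : ℕ):ℝ)*a + ((p₁+p₂:ℤ):ℝ) - x
        = ((n₁:ℝ)*a + p₁ - x) + (((n₂:ℕ):ℝ)*a + p₂) := by rw [hcast]; push_cast; ring
    rw [e]
    calc |((n₁:ℝ)*a + p₁ - x) + (((n₂:ℕ):ℝ)*a + p₂)|
        ≤ |(n₁:ℝ)*a + p₁ - x| + |((n₂:ℕ):ℝ)*a + p₂| := abs_add_le _ _
      _ < ε := by linarith
  · have e : (((n₁ + (n₂:ℤ)).toNat : ℕ):ℝ)*b + ((q₁+q₂:ℤ):ℝ) - y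
        = ((n₁:ℝ)*b + q₁ - y) + (((n₂:ℕ):ℝ)*b + q₂) := by rw [hcast]; push_cast; ring
    rw [e]
    calc |((n₁:ℝ)*b + q₁ - y) + (((n₂:ℕ):ℝ)*b + q₂)|
        ≤ |(n₁:ℝ)*b + q₁ - y| + |((n₂:ℕ):ℝ)*b + q₂| := abs_add_le _ _
      _ < ε := by linarith
lemma tendsto_aux {g : ℕ → ℝ} {L : ℝ} (h : ∀ i : ℕ, |g i - L| < 1/((i:ℝ)+1)) :
    Filter.Tendsto g Filter.atTop (nhds L) := by
  rw [Metric.tendsto_atTop]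
  intro ε hε
  obtain ⟨N, hN⟩ := exists_nat_gt (1/ε)
  refine ⟨N, fun i hi => ?_⟩
  rw [Real.dist_eq]
  have h3 : (N:ℝ) < (i:ℝ)+1 := by exact_mod_cast by omega
  have h5 : 1 < (N:ℝ) * ε := (div_lt_iff₀ hε).1 hN
  have h2 : 1/((i:ℝ)+1) < ε := by
    rw [div_lt_iff₀ (by positivity)]
    nlinarith
  exact (h i).trans h2

lemma AC_coe_sub_int (x : ℝ) (z : ℤ) :
    ((x - z : ℝ) : AddCircle (1:ℝ)) = (x : AddCircle (1:ℝ)) := by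
  have h : ((z:ℝ) : AddCircle (1:ℝ)) = 0 := by
    rw [QuotientAddGroup.eq_zero_iff]; exact ⟨z, by simp⟩
  have h2 : ((x - z : ℝ) : AddCircle (1:ℝ))
      = (x : AddCircle (1:ℝ)) - ((z:ℝ) : AddCircle (1:ℝ)) := rfl
  rw [h2, h, sub_zero]

lemma tendsto_AC {g : ℕ → ℝ} {L : ℝ} (h : Filter.Tendsto g Filter.atTop (nhds L)) :
    Filter.Tendsto (fun i => ((g i : ℝ) : AddCircle (1:ℝ))) Filter.atTop
      (nhds ((L : ℝ) : AddCircle (1:ℝ))) :=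
  ((AddCircle.continuous_mk' 1).tendsto L).comp h

/-- The set `S = { (m − k·θ, k·α₁ mod 1, m·α₂ mod 1) : k, m ∈ ℕ }` in
`ℝ × (ℝ/ℤ) × (ℝ/ℤ)`. -/
def Sset (θ α₁ α₂ : ℝ) : Set (ℝ × AddCircle (1 : ℝ) × AddCircle (1 : ℝ)) :=
  {x | ∃ k m : ℕ, x = ((m : ℝ) - (k : ℝ) * θ,
    (((k : ℝ) * α₁ : ℝ) : AddCircle (1 : ℝ)),
    (((m : ℝ) * α₂ : ℝ) : AddCircle (1 : ℝ)))}

set_option maxHeartbeats 1000000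

/-- Suppose `α₁` and `α₂` are irrational, `1, θ, α₁` are linearly independent over `ℚ`,
and `θ·α₂ = (p₁/q₁)·θ + (p₂/q₂)·α₁ + p₃/q₃`. Then for every `(t, s) ∈ ℝ²`, the point
`(t, s mod 1, ((α₂ − p₁/q₁)·t + (p₂/q₂)·s) mod 1)` lies in the closure of `S`. -/
theorem stmt13 (θ α₁ α₂ : ℝ) (hθ : 0 < θ)
    (hα₁ : α₁ ∈ Set.Ioo (0 : ℝ) (1 / 2)) (hα₂ : α₂ ∈ Set.Ioo (0 : ℝ) (1 / 2))
    (hirr1 : Irrational α₁) (hirr2 : Irrational α₂)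
    (hli : LinearIndependent ℚ ![(1 : ℝ), θ, α₁])
    (p₁ p₂ p₃ : ℤ) (q₁ q₂ q₃ : ℕ) (hq₁ : 0 < q₁) (hq₂ : 0 < q₂) (hq₃ : 0 < q₃)
    (heq : θ * α₂ = (p₁ : ℝ) / (q₁ : ℝ) * θ + (p₂ : ℝ) / (q₂ : ℝ) * α₁ +
      (p₃ : ℝ) / (q₃ : ℝ)) :
    ∀ t s : ℝ,
      (t, ((s : ℝ) : AddCircle (1 : ℝ)),
        ((((α₂ - (p₁ : ℝ) / (q₁ : ℝ)) * t + (p₂ : ℝ) / (q₂ : ℝ) * s : ℝ)) :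
          AddCircle (1 : ℝ))) ∈ closure (Sset θ α₁ α₂) := by
  intro t s
  set u : ℝ := (α₂ - (p₁ : ℝ) / (q₁ : ℝ)) * t + (p₂ : ℝ) / (q₂ : ℝ) * s with hu
  have hq₁R : (0:ℝ) < q₁ := by exact_mod_cast hq₁
  have hq₂R : (0:ℝ) < q₂ := by exact_mod_cast hq₂
  have hq₃R : (0:ℝ) < q₃ := by exact_mod_cast hq₃
  have hli'' : ∀ c₀ c₁ c₂ : ℤ, (c₀:ℝ) + (c₁:ℝ)*θ + (c₂:ℝ)*α₁ = 0 →
      c₀ = 0 ∧ c₁ = 0 ∧ c₂ = 0 := by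
    intro c₀ c₁ c₂ h
    have h2 := Fintype.linearIndependent_iff.1 hli ![(c₀:ℚ), (c₁:ℚ), (c₂:ℚ)] ?_
    · refine ⟨?_, ?_, ?_⟩
      · have h3 := h2 0; simp at h3; exact_mod_cast h3
      · have h3 := h2 1; simp at h3; exact_mod_cast h3
      · have h3 := h2 2; simp at h3; exact_mod_cast h3
    · rw [Fin.sum_univ_three]
      simp only [Matrix.cons_val_zero, Matrix.cons_val_one, Matrix.head_cons,
        Matrix.cons_val_two, Matrix.tail_cons, Rat.smul_def]
      push_cast
      linarith [h]
  set A : ℝ := ((q₂*q₃:ℕ):ℝ) * θ / q₁ with hA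
  set Bb : ℝ := (q₃:ℝ) * α₁ with hBb
  have hQR : (0:ℝ) < ((q₂*q₃:ℕ):ℝ) := by positivity
  have hApos : 0 < A := by rw [hA]; positivity
  have hind : ∀ c₀ c₁ c₂ : ℤ, (c₀:ℝ) + (c₁:ℝ)*A + (c₂:ℝ)*Bb = 0 →
      c₀ = 0 ∧ c₁ = 0 ∧ c₂ = 0 := by
    intro c₀ c₁ c₂ h
    rw [hA, hBb] at h
    have hq₁ne : (q₁:ℝ) ≠ 0 := hq₁R.ne'
    field_simp at h
    have h2 : ((c₀*q₁:ℤ):ℝ) + ((c₁*(q₂*q₃:ℕ):ℤ):ℝ)*θ + ((c₂*q₃*q₁:ℤ):ℝ)*α₁ = 0 := by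
      push_cast at h ⊢
      linear_combination h
    obtain ⟨e0, e1, e2⟩ := hli'' _ _ _ h2
    have hq₁Z : (q₁:ℤ) ≠ 0 := by exact_mod_cast hq₁.ne'
    have hq₂Z : (q₂:ℤ) ≠ 0 := by exact_mod_cast hq₂.ne'
    have hq₃Z : (q₃:ℤ) ≠ 0 := by exact_mod_cast hq₃.ne'
    refine ⟨?_, ?_, ?_⟩
    · rcases mul_eq_zero.1 e0 with h' | h'
      · exact h'
      · exact absurd h' hq₁Z
    · rcases mul_eq_zero.1 e1 with h' | h'
      · exact h'
      · exfalso
        have : ((q₂*q₃:ℕ):ℤ) ≠ 0 := by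
          have : (0:ℕ) < q₂*q₃ := Nat.mul_pos hq₂ hq₃
          exact_mod_cast this.ne'
        exact this h'
    · rcases mul_eq_zero.1 e2 with h' | h'
      · rcases mul_eq_zero.1 h' with h'' | h''
        · exact h''
        · exact absurd h'' hq₃Z
      · exact absurd h' hq₁Z
  have hh := heq
  field_simp at hh
  have key : ∀ ε : ℝ, 0 < ε → ∃ (k m : ℕ) (z w : ℤ),
      |(m:ℝ) - (k:ℝ)*θ - t| < ε ∧ |(k:ℝ)*α₁ - s - z| < ε ∧ |(m:ℝ)*α₂ - u - w| < ε := by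
    intro ε hε
    set Cc : ℝ := q₁*(|α₂| + |(p₁:ℝ)|/q₁) + |(p₂:ℝ)| + q₁ + q₂ + 1 with hCc
    have hCpos : 0 < Cc := by positivity
    set ε' : ℝ := ε / Cc with hε'
    have hε'pos : 0 < ε' := by positivity
    obtain ⟨N, hN⟩ := exists_nat_gt ((|t|/q₁ + ε' + 1)/A)
    obtain ⟨n, hNn, p, q, h1, h2⟩ := K2nat hind (-(t/q₁)) (s/q₂) hε'pos N
    -- p is very negative
    have hNA : (|t|/q₁ + ε' + 1) < N * A := by
      rw [div_lt_iff₀ hApos] at hN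
      linarith [hN]
    have hnN : (N:ℝ) ≤ (n:ℝ) := by exact_mod_cast hNn
    have hnA : (N:ℝ)*A ≤ (n:ℝ)*A := mul_le_mul_of_nonneg_right hnN hApos.le
    have hb := abs_lt.1 h1
    have ht1 : t/(q₁:ℝ) ≤ |t|/q₁ := (div_le_div_iff_of_pos_right hq₁R).2 (le_abs_self t)
    have ht2 : -(|t|/(q₁:ℝ)) ≤ t/q₁ := by
      have := (div_le_div_iff_of_pos_right hq₁R).2 (neg_abs_le t)
      rwa [neg_div] at this
    have hplt : (p:ℝ) < -1 := by linarith [hb.2]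
    have hpneg : p < 0 := by exact_mod_cast (show (p:ℝ) < 0 by linarith)
    set m' : ℕ := (-p).toNat with hm'
    have hm'c : ((m' : ℕ):ℝ) = -(p:ℝ) := by
      have h6 : ((-p).toNat : ℤ) = -p := Int.toNat_of_nonneg (by omega)
      exact_mod_cast h6
    have hEqC : Cc * ε' = ε := by
      rw [hε']; field_simp
    have e1 : ((q₁*m' : ℕ):ℝ) - (((q₂*q₃) * n : ℕ):ℝ)*θ - t
        = (-(q₁:ℝ))*((n:ℝ)*A + p - -(t/q₁)) := by
      push_cast
      rw [hm'c, hA]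
      push_cast
      field_simp
      ring
    have hE1 : |((q₁*m' : ℕ):ℝ) - (((q₂*q₃) * n : ℕ):ℝ)*θ - t| < q₁ * ε' := by
      rw [e1, abs_mul, abs_neg, abs_of_pos hq₁R]
      exact mul_lt_mul_of_pos_left h1 hq₁R
    have hq₁C : (q₁:ℝ) ≤ Cc := by
      rw [hCc]
      have k1 : (0:ℝ) ≤ q₁*(|α₂| + |(p₁:ℝ)|/q₁) := by positivity
      have k2 : (0:ℝ) ≤ |(p₂:ℝ)| := abs_nonneg _
      linarith [hq₂R]
    have hq₂C : (q₂:ℝ) ≤ Cc := by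
      rw [hCc]
      have k1 : (0:ℝ) ≤ q₁*(|α₂| + |(p₁:ℝ)|/q₁) := by positivity
      have k2 : (0:ℝ) ≤ |(p₂:ℝ)| := abs_nonneg _
      linarith [hq₁R]
    refine ⟨(q₂*q₃) * n, q₁ * m', -((q₂:ℤ)*q), p₁*(m':ℤ) - p₂*q + p₃*(q₂:ℤ)*(n:ℤ),
      ?_, ?_, ?_⟩
    · have hfin : (q₁:ℝ) * ε' ≤ ε := by
        have := mul_le_mul_of_nonneg_right hq₁C hε'pos.le
        linarith
      exact hE1.trans_le hfin
    · have e2 : (((q₂*q₃) * n : ℕ):ℝ)*α₁ - s - ((-((q₂:ℤ)*q) : ℤ):ℝ)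
          = (q₂:ℝ)*((n:ℝ)*Bb + q - s/q₂) := by
        push_cast
        rw [hBb]
        field_simp
        ring
      rw [e2, abs_mul, abs_of_pos hq₂R]
      have hstep : (q₂:ℝ) * |(n:ℝ)*Bb + q - s/q₂| < q₂ * ε' :=
        mul_lt_mul_of_pos_left h2 hq₂R
      have hfin : (q₂:ℝ) * ε' ≤ ε := by
        have := mul_le_mul_of_nonneg_right hq₂C hε'pos.le
        linarith
      linarith
    · have e3 : ((q₁*m' : ℕ):ℝ)*α₂ - u - ((p₁*(m':ℤ) - p₂*q + p₃*(q₂:ℤ)*(n:ℤ) : ℤ):ℝ)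
          = (((q₁*m' : ℕ):ℝ) - (((q₂*q₃) * n : ℕ):ℝ)*θ - t)*(α₂ - (p₁:ℝ)/q₁)
            + (p₂:ℝ)*((n:ℝ)*Bb + q - s/q₂) := by
        push_cast
        rw [hm'c, hBb, hu]
        field_simp
        linear_combination ((q₂:ℝ)*(n:ℝ)) * hh
      rw [e3]
      have habs : |α₂ - (p₁:ℝ)/q₁| ≤ |α₂| + |(p₁:ℝ)|/q₁ := by
        have h7 := abs_sub α₂ ((p₁:ℝ)/q₁)
        rwa [abs_div, abs_of_pos hq₁R] at h7
      have b1 : |(((q₁*m' : ℕ):ℝ) - (((q₂*q₃) * n : ℕ):ℝ)*θ - t)*(α₂ - (p₁:ℝ)/q₁)|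
          ≤ (q₁*ε')*(|α₂| + |(p₁:ℝ)|/q₁) := by
        rw [abs_mul]
        exact mul_le_mul hE1.le habs (abs_nonneg _) (by positivity)
      have b2 : |(p₂:ℝ)*((n:ℝ)*Bb + q - s/q₂)| ≤ |(p₂:ℝ)| *ε' := by
        rw [abs_mul]
        exact mul_le_mul_of_nonneg_left h2.le (abs_nonneg _)
      have hsum : (q₁*ε')*(|α₂| + |(p₁:ℝ)|/q₁) + |(p₂:ℝ)| *ε'
          = ε'*(Cc - ((q₁:ℝ) + q₂ + 1)) := by
        rw [hCc]; ring
      have hlast : ε'*(Cc - ((q₁:ℝ) + q₂ + 1)) < ε := by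
        rw [← hEqC]
        have : Cc - ((q₁:ℝ) + q₂ + 1) < Cc := by linarith [hq₁R, hq₂R]
        calc ε'*(Cc - ((q₁:ℝ) + q₂ + 1)) < ε'*Cc := mul_lt_mul_of_pos_left this hε'pos
          _ = Cc * ε' := by ring
      calc |(((q₁*m' : ℕ):ℝ) - (((q₂*q₃) * n : ℕ):ℝ)*θ - t)*(α₂ - (p₁:ℝ)/q₁)
            + (p₂:ℝ)*((n:ℝ)*Bb + q - s/q₂)|
          ≤ |(((q₁*m' : ℕ):ℝ) - (((q₂*q₃) * n : ℕ):ℝ)*θ - t)*(α₂ - (p₁:ℝ)/q₁)|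
            + |(p₂:ℝ)*((n:ℝ)*Bb + q - s/q₂)| := abs_add_le _ _
        _ ≤ (q₁*ε')*(|α₂| + |(p₁:ℝ)|/q₁) + |(p₂:ℝ)| *ε' := by linarith
        _ < ε := by rw [hsum]; exact hlast
  have keyseq : ∀ i : ℕ, ∃ (k m : ℕ) (z w : ℤ),
      |(m:ℝ) - (k:ℝ)*θ - t| < 1/((i:ℝ)+1) ∧ |(k:ℝ)*α₁ - s - z| < 1/((i:ℝ)+1) ∧
        |(m:ℝ)*α₂ - u - w| < 1/((i:ℝ)+1) :=
    fun i => key _ (by positivity)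
  choose fk fm fz fw hA1 hA2 hA3 using keyseq
  have hmem : ∀ i : ℕ, (((fm i : ℕ):ℝ) - ((fk i : ℕ):ℝ)*θ,
      ((((fk i : ℕ):ℝ) * α₁ : ℝ) : AddCircle (1:ℝ)),
      ((((fm i : ℕ):ℝ) * α₂ : ℝ) : AddCircle (1:ℝ))) ∈ Sset θ α₁ α₂ :=
    fun i => ⟨fk i, fm i, rfl⟩
  apply mem_closure_of_tendsto (f := fun i : ℕ => (((fm i : ℕ):ℝ) - ((fk i : ℕ):ℝ)*θ,
      ((((fk i : ℕ):ℝ) * α₁ : ℝ) : AddCircle (1:ℝ)),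
      ((((fm i : ℕ):ℝ) * α₂ : ℝ) : AddCircle (1:ℝ)))) (b := Filter.atTop)
    ?_ (Filter.Eventually.of_forall hmem)
  apply Filter.Tendsto.prodMk_nhds
  · exact tendsto_aux (fun i => by
      have := hA1 i
      have e : ((fm i : ℕ):ℝ) - ((fk i : ℕ):ℝ)*θ - t = ((fm i:ℝ) - (fk i:ℝ)*θ - t) := by push_cast; ring
      rw [e]; exact this)
  apply Filter.Tendsto.prodMk_nhds
  · have he : (fun i : ℕ => ((((fk i : ℕ):ℝ) * α₁ : ℝ) : AddCircle (1:ℝ)))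
        = fun i : ℕ => ((((fk i : ℕ):ℝ) * α₁ - (fz i) : ℝ) : AddCircle (1:ℝ)) := by
      funext i
      rw [AC_coe_sub_int]
    rw [he]
    apply tendsto_AC
    apply tendsto_aux (fun i => ?_)
    have := hA2 i
    have e : ((fk i : ℕ):ℝ) * α₁ - (fz i) - s = ((fk i:ℝ)*α₁ - s - fz i) := by push_cast; ring
    rw [e]; exact this
  · have he : (fun i : ℕ => ((((fm i : ℕ):ℝ) * α₂ : ℝ) : AddCircle (1:ℝ)))
        = fun i : ℕ => ((((fm i : ℕ):ℝ) * α₂ - (fw i) : ℝ) : AddCircle (1:ℝ)) := by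
      funext i
      rw [AC_coe_sub_int]
    rw [he]
    apply tendsto_AC
    apply tendsto_aux (fun i => ?_)
    have := hA3 i
    have e : ((fm i : ℕ):ℝ) * α₂ - (fw i) - u = ((fm i:ℝ)*α₂ - u - fw i) := by push_cast; ring
    rw [e]; exact this
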